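/- Let X = (x_1, …, x_n) and Y = (y_1, …, y_n) be two sequences of real numbers, and for a sequence Z of n reals let top_p(Z) denote the sum of the p largest entries of Z (for p ∈ {1,…,n}). Then for every subset S ⊆ {1,…,n} and every p ∈ {1,…,n}: |top_p(X) − top_p(Y)| ≤ p·max_{i∈S} |x_i − y_i| + ∑_{i∈{1,…,n}∖S} |x_i − y_i| (where the maximum over an empty S is taken to be 0). -/

import Mathlib

/-- `topP p s` is the sum of the `p` largest entries of the multiset `s` of reals
(entries sorted in nonincreasing order, first `p` taken). -/
noncomputable def topP (p : ℕ) (s : Multiset ℝ) : ℝ :=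
  (((s.sort (· ≤ ·)).reverse).take p).sum

lemma exists_le_map' {α β : Type*} (f : α → β) :
    ∀ (s : Multiset α) (t : Multiset β), t ≤ s.map f → ∃ u ≤ s, u.map f = t := by
  intro s
  induction s using Multiset.induction with
  | empty =>
    intro t ht
    simp only [Multiset.map_zero, Multiset.le_zero] at ht
    exact ⟨0, le_refl _, by simp [ht]⟩
  | cons a s ih =>
    intro t ht
    rw [Multiset.map_cons] at ht
    by_cases h : f a ∈ t
    · obtain ⟨t', rfl⟩ := Multiset.exists_cons_of_mem h
      obtain ⟨u, hu, hmap⟩ := ih t' ((Multiset.cons_le_cons_iff _).1 ht)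
      exact ⟨a ::ₘ u, Multiset.cons_le_cons _ hu, by simp [hmap]⟩
    · obtain ⟨u, hu, hmap⟩ := ih t ((Multiset.le_cons_of_notMem h).1 ht)
      exact ⟨u, le_trans hu (Multiset.le_cons_self _ _), hmap⟩

lemma sum_le_sum_take : ∀ (l : List ℝ), l.Pairwise (fun a b => b ≤ a) →
    ∀ t : Multiset ℝ, t ≤ ↑l → t.sum ≤ (l.take (Multiset.card t)).sum := by
  intro l
  induction l with
  | nil =>
    intro _ t ht
    have : t = 0 := Multiset.le_zero.1 (by simpa using ht)
    simp [this]
  | cons a l ih =>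
    intro hl t ht
    have hl' : l.Pairwise (fun a b => b ≤ a) := hl.of_cons
    have ha : ∀ b ∈ l, b ≤ a := fun b hb => List.rel_of_pairwise_cons hl hb
    rw [show ((a :: l : List ℝ) : Multiset ℝ) = a ::ₘ (↑l) from rfl] at ht
    by_cases h : a ∈ t
    · obtain ⟨t', rfl⟩ := Multiset.exists_cons_of_mem h
      have ht' : t' ≤ ↑l := (Multiset.cons_le_cons_iff a).1 ht
      have := ih hl' t' ht'
      simp only [Multiset.card_cons, List.take_succ_cons, List.sum_cons, Multiset.sum_cons]
      linarith
    · have ht' : t ≤ ↑l := (Multiset.le_cons_of_notMem h).1 ht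
      have h1 := ih hl' t ht'
      have hcard : Multiset.card t ≤ l.length := by simpa using Multiset.card_le_card ht'
      refine h1.trans ?_
      rcases Nat.eq_zero_or_pos (Multiset.card t) with h0 | h0
      · simp [h0]
      · obtain ⟨m, hm⟩ := Nat.exists_eq_succ_of_ne_zero h0.ne'
        rw [hm]
        have hml : m < l.length := by omega
        rw [List.take_succ_cons, List.sum_cons, List.sum_take_succ l m hml]
        have hga : l.get ⟨m, hml⟩ ≤ a := ha _ (List.get_mem l ⟨m, hml⟩)
        simp only [List.get_eq_getElem] at hga
        linarith

lemma key_lemma (n : ℕ) (x y : Fin n → ℝ) (S : Finset (Fin n)) (p : ℕ) (hpn : p ≤ n) :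
    topP p (Multiset.map x Finset.univ.val) - topP p (Multiset.map y Finset.univ.val) ≤
      (p : ℝ) * (S.fold max 0 fun i => |x i - y i|) + ∑ i ∈ Finset.univ \ S, |x i - y i| := by
  classical
  set M : ℝ := S.fold max 0 fun i => |x i - y i| with hM
  have hM0 : 0 ≤ M := (Finset.le_fold_max _).2 (Or.inl le_rfl)
  have hMi : ∀ i ∈ S, |x i - y i| ≤ M := fun i hi =>
    (Finset.le_fold_max _).2 (Or.inr ⟨i, hi, le_rfl⟩)
  set sx := Multiset.map x Finset.univ.val with hsx
  set sy := Multiset.map y Finset.univ.val with hsy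
  set lx : List ℝ := (sx.sort (· ≤ ·)).reverse with hlx
  set ly : List ℝ := (sy.sort (· ≤ ·)).reverse with hly
  have hlx_coe : (↑lx : Multiset ℝ) = sx := by
    rw [hlx, Multiset.coe_reverse, Multiset.sort_eq]
  have hly_coe : (↑ly : Multiset ℝ) = sy := by
    rw [hly, Multiset.coe_reverse, Multiset.sort_eq]
  have hly_sorted : ly.Pairwise (fun a b => b ≤ a) := by
    rw [hly]
    exact List.pairwise_reverse.2 (Multiset.pairwise_sort _ _)
  -- t = the p largest of sx
  have hlx_len : lx.length = n := by
    have := congrArg Multiset.card hlx_coe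
    simp only [Multiset.coe_card] at this
    rw [this, hsx]
    simp
  set t : Multiset ℝ := ↑(lx.take p) with htdef
  have ht_le : t ≤ sx := by
    rw [← hlx_coe, htdef]
    exact Multiset.coe_le.2 (lx.take_sublist p).subperm
  have ht_card : Multiset.card t = p := by
    simp [htdef, hlx_len, Nat.min_eq_left hpn]
  have ht_sum : t.sum = topP p sx := by
    simp [htdef, topP, hlx]
  obtain ⟨u, hu_le, hu_map⟩ := exists_le_map' x Finset.univ.val t ht_le
  have hu_card : Multiset.card u = p := by
    have := congrArg Multiset.card hu_map
    simpa [ht_card] using this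
  have hu_nodup : u.Nodup := Multiset.nodup_of_le hu_le Finset.univ.nodup
  set T : Finset (Fin n) := ⟨u, hu_nodup⟩ with hT
  have hT_card : T.card = p := hu_card
  have hTx : ∑ i ∈ T, x i = topP p sx := by
    rw [← ht_sum, ← hu_map]; rfl
  have hTy : ∑ i ∈ T, y i ≤ topP p sy := by
    have h1 : (u.map y) ≤ ↑ly := by
      rw [hly_coe]
      exact Multiset.map_le_map hu_le
    have h2 := sum_le_sum_take ly hly_sorted (u.map y) h1
    have h3 : Multiset.card (u.map y) = p := by simpa using hu_card
    rw [h3] at h2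
    exact h2
  have main : topP p sx - topP p sy ≤ ∑ i ∈ T, (x i - y i) := by
    rw [Finset.sum_sub_distrib, hTx]
    linarith
  have habs : ∑ i ∈ T, (x i - y i) ≤ ∑ i ∈ T, |x i - y i| :=
    Finset.sum_le_sum fun i _ => le_abs_self _
  have hs : ∑ i ∈ T, |x i - y i| =
      ∑ i ∈ T ∩ S, |x i - y i| + ∑ i ∈ T \ S, |x i - y i| :=
    (Finset.sum_inter_add_sum_sdiff T S _).symm
  have h4 : ∑ i ∈ T ∩ S, |x i - y i| ≤ (p : ℝ) * M := by
    calc ∑ i ∈ T ∩ S, |x i - y i| ≤ (T ∩ S).card • M :=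
          Finset.sum_le_card_nsmul _ _ _ fun i hi =>
            hMi i (Finset.mem_inter.1 hi).2
      _ = ((T ∩ S).card : ℝ) * M := by simp [nsmul_eq_mul]
      _ ≤ (p : ℝ) * M := by
          apply mul_le_mul_of_nonneg_right _ hM0
          exact_mod_cast (Finset.card_le_card (Finset.inter_subset_left)).trans hT_card.le
  have h5 : ∑ i ∈ T \ S, |x i - y i| ≤ ∑ i ∈ Finset.univ \ S, |x i - y i| :=
    Finset.sum_le_sum_of_subset_of_nonneg
      (Finset.sdiff_subset_sdiff (Finset.subset_univ T) le_rfl)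
      (fun i _ _ => abs_nonneg _)
  linarith

theorem stmt_3 (n : ℕ) (x y : Fin n → ℝ) (S : Finset (Fin n)) (p : ℕ)
    (hp : 1 ≤ p) (hpn : p ≤ n) :
    |topP p (Multiset.map x Finset.univ.val) - topP p (Multiset.map y Finset.univ.val)| ≤
      (p : ℝ) * (S.fold max 0 fun i => |x i - y i|) + ∑ i ∈ Finset.univ \ S, |x i - y i| := by
  rw [abs_sub_le_iff]
  constructor
  · exact key_lemma n x y S p hpn
  · have h := key_lemma n y x S p hpn
    have hfun : (fun i => |y i - x i|) = fun i => |x i - y i| :=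
      funext fun i => abs_sub_comm _ _
    rw [hfun] at h
    simpa [abs_sub_comm] using h
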